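/- Let m ≥ 2 be a natural number, let h : Fin m → ℝ satisfy h_i > 0 for all i and Σ_i h_i = 1, and let γ > 0 and γ' > 0 be reals. For a parameter c > 0, define the Dirichlet density with parameters (c·h_1, …, c·h_m) at a point q in the open simplex {q : Fin m → ℝ | q_i > 0 for all i, Σ_i q_i = 1} by f_c(q) = (Real.Gamma(c) / ∏_i Real.Gamma(c·h_i)) · ∏_i q_i^{c·h_i − 1}. If f_γ(q) = f_{γ'}(q) for every q in the open simplex, then γ = γ'. -/

import Mathlib

/-- Identifiability of the Dirichlet concentration parameter: if the Dirichlet densities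
with parameters `(γ h₁, …, γ h_m)` and `(γ' h₁, …, γ' h_m)` agree on the open simplex,
then `γ = γ'`. -/
theorem stmt_16 (m : ℕ) (hm : 2 ≤ m) (h : Fin m → ℝ)
    (hpos : ∀ i, 0 < h i) (hsum : ∑ i, h i = 1)
    (γ γ' : ℝ) (hγ : 0 < γ) (hγ' : 0 < γ')
    (heq : ∀ q : Fin m → ℝ, (∀ i, 0 < q i) → ∑ i, q i = 1 →
      (Real.Gamma γ / ∏ i, Real.Gamma (γ * h i)) * ∏ i, q i ^ (γ * h i - 1) =
      (Real.Gamma γ' / ∏ i, Real.Gamma (γ' * h i)) * ∏ i, q i ^ (γ' * h i - 1)) :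
    γ = γ' := by
  set M : ℝ := (m : ℝ) with hMdef
  have hM2 : (2 : ℝ) ≤ M := by rw [hMdef]; exact_mod_cast hm
  have hM0 : (0 : ℝ) < M := by linarith
  have hM1ne : M - 1 ≠ 0 := by intro hh; linarith
  set i₀ : Fin m := ⟨0, by omega⟩ with hi₀def
  set j₁ : Fin m := ⟨1, by omega⟩ with hj₁def
  have hij : j₁ ≠ i₀ := by simp [hi₀def, hj₁def, Fin.ext_iff]
  have h0pos : 0 < h i₀ := hpos i₀
  have hsum_erase : ∑ i ∈ Finset.univ.erase i₀, h i = 1 - h i₀ := by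
    have h2 := Finset.add_sum_erase Finset.univ h (Finset.mem_univ i₀)
    rw [hsum] at h2
    linarith
  have h0lt1 : h i₀ < 1 := by
    have hj : 0 < h j₁ := hpos j₁
    have hle : h j₁ ≤ ∑ i ∈ Finset.univ.erase i₀, h i :=
      Finset.single_le_sum (fun i _ => (hpos i).le)
        (Finset.mem_erase.mpr ⟨hij, Finset.mem_univ j₁⟩)
    rw [hsum_erase] at hle
    linarith
  -- the special point
  set t : ℝ := (1 / (2 * M)) ^ (h i₀)⁻¹ with htdef
  have hbase0 : (0 : ℝ) < 1 / (2 * M) := by positivity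
  have hbase1 : 1 / (2 * M) < 1 := by
    rw [div_lt_one (by linarith)]; linarith
  have ht0 : 0 < t := Real.rpow_pos_of_pos hbase0 _
  have ht1 : t < 1 := Real.rpow_lt_one hbase0.le hbase1 (by positivity)
  have htpow : t ^ h i₀ = 1 / (2 * M) := Real.rpow_inv_rpow hbase0.le h0pos.ne'
  set u : ℝ := (1 - t) / (M - 1) with hudef
  have hu0 : 0 < u := by
    apply div_pos <;> linarith
  have hu1 : u ≤ 1 := by
    rw [div_le_one (by linarith)]; linarith
  -- the two test points
  set q1 : Fin m → ℝ := fun _ => 1 / M with hq1def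
  set q2 : Fin m → ℝ := fun i => if i = i₀ then t else u with hq2def
  have hq1pos : ∀ i, 0 < q1 i := fun i => by positivity
  have hq1sum : ∑ i, q1 i = 1 := by
    rw [Finset.sum_const, Finset.card_univ, Fintype.card_fin, nsmul_eq_mul]
    field_simp
    exact hMdef.symm
  have hq2pos : ∀ i, 0 < q2 i := by
    intro i; simp only [hq2def]; split <;> assumption
  have hcard : ((Finset.univ.erase i₀).card : ℝ) = M - 1 := by
    rw [Finset.card_erase_of_mem (Finset.mem_univ i₀), Finset.card_univ, Fintype.card_fin]
    push_cast [Nat.cast_sub (by omega : 1 ≤ m)]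
    ring
  have hq2sum : ∑ i, q2 i = 1 := by
    rw [← Finset.add_sum_erase Finset.univ q2 (Finset.mem_univ i₀)]
    have hval : ∀ i ∈ Finset.univ.erase i₀, q2 i = u := fun i hi => by
      simp [hq2def, (Finset.mem_erase.mp hi).1]
    have herase : ∑ i ∈ Finset.univ.erase i₀, q2 i = (M - 1) * u := by
      rw [Finset.sum_congr rfl hval, Finset.sum_const, nsmul_eq_mul, hcard]
    rw [herase]
    simp only [hq2def, if_pos rfl]
    rw [hudef, mul_comm (M - 1), div_mul_cancel₀ _ hM1ne]
    ring
  -- geometric means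
  set G : (Fin m → ℝ) → ℝ := fun q => ∏ i, q i ^ h i with hGdef
  have hGpos : ∀ q : Fin m → ℝ, (∀ i, 0 < q i) → 0 < G q := by
    intro q hq
    exact Finset.prod_pos fun i _ => Real.rpow_pos_of_pos (hq i) _
  set K : ℝ := Real.Gamma γ / ∏ i, Real.Gamma (γ * h i) with hKdef
  set K' : ℝ := Real.Gamma γ' / ∏ i, Real.Gamma (γ' * h i) with hK'def
  have hK'pos : 0 < K' := by
    apply div_pos (Real.Gamma_pos_of_pos hγ')
    exact Finset.prod_pos fun i _ => Real.Gamma_pos_of_pos (mul_pos hγ' (hpos i))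
  -- key identity
  have key : ∀ q : Fin m → ℝ, (∀ i, 0 < q i) → ∑ i, q i = 1 →
      K = K' * (G q) ^ (γ' - γ) := by
    intro q hq hqs
    have hP : (0 : ℝ) < ∏ i, q i ^ (γ * h i - 1) :=
      Finset.prod_pos fun i _ => Real.rpow_pos_of_pos (hq i) _
    have hsplit : ∏ i, q i ^ (γ' * h i - 1) =
        (∏ i, q i ^ (γ * h i - 1)) * (G q) ^ (γ' - γ) := by
      have hpt : ∀ i : Fin m, q i ^ (γ' * h i - 1) =
          q i ^ (γ * h i - 1) * (q i ^ h i) ^ (γ' - γ) := by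
        intro i
        rw [← Real.rpow_mul (hq i).le, ← Real.rpow_add (hq i)]
        congr 1
        ring
      rw [Finset.prod_congr rfl (fun i _ => hpt i), Finset.prod_mul_distrib,
        Real.finset_prod_rpow _ _ (fun i _ => (Real.rpow_pos_of_pos (hq i) _).le)]
    have he := heq q hq hqs
    rw [hsplit, mul_comm (∏ i, q i ^ (γ * h i - 1)), ← mul_assoc] at he
    exact mul_right_cancel₀ hP.ne' he
  have hG1 : G q1 = 1 / M := by
    simp only [hGdef, hq1def]
    rw [← Real.rpow_sum_of_pos (by positivity : (0:ℝ) < 1 / M) h Finset.univ, hsum,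
      Real.rpow_one]
  have hG2 : G q2 = (1 / (2 * M)) * u ^ (1 - h i₀) := by
    simp only [hGdef]
    rw [← Finset.mul_prod_erase Finset.univ _ (Finset.mem_univ i₀)]
    have hval : ∀ i ∈ Finset.univ.erase i₀, q2 i ^ h i = u ^ h i := fun i hi => by
      simp [hq2def, (Finset.mem_erase.mp hi).1]
    have herase : ∏ i ∈ Finset.univ.erase i₀, q2 i ^ h i = u ^ (1 - h i₀) := by
      rw [Finset.prod_congr rfl hval, ← Real.rpow_sum_of_pos hu0 h _, hsum_erase]
    rw [herase]
    simp only [hq2def, if_pos rfl]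
    rw [htpow]
  have hG2lt : G q2 < G q1 := by
    rw [hG1, hG2]
    have h1 : u ^ (1 - h i₀) ≤ 1 := Real.rpow_le_one hu0.le hu1 (by linarith)
    have h2 : (1 / (2 * M)) * u ^ (1 - h i₀) ≤ 1 / (2 * M) := by
      nlinarith [Real.rpow_pos_of_pos hu0 (1 - h i₀)]
    have h3 : 1 / (2 * M) < 1 / M := by
      apply div_lt_div_of_pos_left one_pos hM0; linarith
    linarith
  -- conclude
  by_contra hne
  have hc : γ' - γ ≠ 0 := fun hc => hne (by linarith)
  have hGG : (G q1) ^ (γ' - γ) = (G q2) ^ (γ' - γ) := by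
    have e1 := key q1 hq1pos hq1sum
    have e2 := key q2 hq2pos hq2sum
    have : K' * (G q1) ^ (γ' - γ) = K' * (G q2) ^ (γ' - γ) := by rw [← e1, ← e2]
    exact mul_left_cancel₀ hK'pos.ne' this
  have hG1pos := hGpos q1 hq1pos
  have hG2pos := hGpos q2 hq2pos
  have hlog : (γ' - γ) * Real.log (G q1) = (γ' - γ) * Real.log (G q2) := by
    rw [← Real.log_rpow hG1pos, ← Real.log_rpow hG2pos, hGG]
  have hlogeq : Real.log (G q1) = Real.log (G q2) := mul_left_cancel₀ hc hlog
  have : G q1 = G q2 := by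
    rw [← Real.exp_log hG1pos, ← Real.exp_log hG2pos, hlogeq]
  linarith
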